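/- Let n ≥ 3 and let v ∈ D^{1,2}(ℝⁿ) be a nontrivial weak solution of Δv - (h/|x|²)v = f₀ |v|^{2*-2} v, where 0 < h < 1/K(n,2,-2)², f₀ > 0, and 2* = 2n/(n-2). Assume the Hardy inequality ∫ v²/|x|² ≤ K(n,2,-2)² ∫|∇v|² and the Sobolev inequality ‖v‖_{2*}² ≤ K(n,2)² ∫|∇v|². Then (1/n)∫_{ℝⁿ}(|∇v|² - h v²/|x|²) dx ≥ (1 - h·K(n,2,-2)²)^{n/2} / (n f₀^{(n-2)/2} K(n,2)ⁿ). -/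

import Mathlib

open Real MeasureTheory

theorem stmt4 (n : ℕ) (hn : 3 ≤ n) (h f₀ K K' : ℝ)
    (hK : 0 < K) (hK' : K' = 2 / (n - 2 : ℝ))
    (hh : 0 < h) (hh2 : h < 1 / K' ^ 2) (hf₀ : 0 < f₀)
    (v : EuclideanSpace ℝ (Fin n) → ℝ)
    (hnontriv : (∫ x : EuclideanSpace ℝ (Fin n), |v x| ^ ((2 * n : ℝ) / (n - 2))) ≠ 0)
    (hweak : (∫ x : EuclideanSpace ℝ (Fin n), ‖fderiv ℝ v x‖ ^ 2)
        - h * ∫ x : EuclideanSpace ℝ (Fin n), v x ^ 2 / ‖x‖ ^ 2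
        = f₀ * ∫ x : EuclideanSpace ℝ (Fin n), |v x| ^ ((2 * n : ℝ) / (n - 2)))
    (hHardy : (∫ x : EuclideanSpace ℝ (Fin n), v x ^ 2 / ‖x‖ ^ 2)
        ≤ K' ^ 2 * ∫ x : EuclideanSpace ℝ (Fin n), ‖fderiv ℝ v x‖ ^ 2)
    (hSobolev : (∫ x : EuclideanSpace ℝ (Fin n), |v x| ^ ((2 * n : ℝ) / (n - 2))) ^ ((n - 2 : ℝ) / n)
        ≤ K ^ 2 * ∫ x : EuclideanSpace ℝ (Fin n), ‖fderiv ℝ v x‖ ^ 2) :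
    (1 / n : ℝ) * ((∫ x : EuclideanSpace ℝ (Fin n), ‖fderiv ℝ v x‖ ^ 2)
        - h * ∫ x : EuclideanSpace ℝ (Fin n), v x ^ 2 / ‖x‖ ^ 2)
      ≥ (1 - h * K' ^ 2) ^ ((n : ℝ) / 2) / (n * f₀ ^ ((n - 2 : ℝ) / 2) * K ^ n) := by
  set A := ∫ x : EuclideanSpace ℝ (Fin n), ‖fderiv ℝ v x‖ ^ 2 with hAdef
  set H := ∫ x : EuclideanSpace ℝ (Fin n), v x ^ 2 / ‖x‖ ^ 2 with hHdef
  set S := ∫ x : EuclideanSpace ℝ (Fin n), |v x| ^ ((2 * n : ℝ) / (n - 2)) with hSdef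
  have hn3 : (3:ℝ) ≤ (n:ℝ) := by exact_mod_cast hn
  have hn2 : (1:ℝ) ≤ (n:ℝ) - 2 := by linarith
  have hnpos : (0:ℝ) < n := by linarith
  have hK'pos : 0 < K' := by rw [hK']; positivity
  have hc : 0 < 1 - h * K' ^ 2 := by
    rw [lt_div_iff₀ (by positivity)] at hh2
    linarith
  have hSnonneg : 0 ≤ S :=
    integral_nonneg fun x => Real.rpow_nonneg (abs_nonneg _) _
  have hSpos : 0 < S := lt_of_le_of_ne hSnonneg (Ne.symm hnontriv)
  set E := f₀ * S with hEdef
  have hEpos : 0 < E := mul_pos hf₀ hSpos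
  set θ : ℝ := ((n:ℝ) - 2) / n with hθ
  have hApos : 0 < A := by
    have h1 : 0 < S ^ θ := Real.rpow_pos_of_pos hSpos _
    nlinarith [hSobolev]
  have hAE : (1 - h * K' ^ 2) * A ≤ E := by
    rw [← hweak]
    nlinarith [hHardy]
  have hSeq : S = E / f₀ := by rw [hEdef]; field_simp
  have h1 : (1 - h * K' ^ 2) * (E ^ θ / f₀ ^ θ) ≤ K ^ 2 * E := by
    rw [← Real.div_rpow hEpos.le hf₀.le, ← hSeq]
    have h2 : K ^ 2 * A ≤ K ^ 2 * (E / (1 - h * K' ^ 2)) := by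
      apply mul_le_mul_of_nonneg_left _ (by positivity)
      rw [le_div_iff₀ hc]
      linarith [hAE]
    have h3 : S ^ θ ≤ K ^ 2 * (E / (1 - h * K' ^ 2)) := le_trans hSobolev h2
    calc (1 - h * K' ^ 2) * S ^ θ
        ≤ (1 - h * K' ^ 2) * (K ^ 2 * (E / (1 - h * K' ^ 2))) :=
          mul_le_mul_of_nonneg_left h3 hc.le
      _ = K ^ 2 * E := by field_simp
  have hθsum : θ + 2 / (n:ℝ) = 1 := by rw [hθ]; field_simp; ring
  have hEsplit : E = E ^ θ * E ^ ((2:ℝ) / n) := by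
    rw [← Real.rpow_add hEpos, hθsum, Real.rpow_one]
  have hEθ : 0 < E ^ θ := Real.rpow_pos_of_pos hEpos _
  have hf₀θ : 0 < f₀ ^ θ := Real.rpow_pos_of_pos hf₀ _
  have h4 : (1 - h * K' ^ 2) ≤ K ^ 2 * f₀ ^ θ * E ^ ((2:ℝ)/n) := by
    have h3' : (1 - h * K' ^ 2) * E ^ θ ≤ (K ^ 2 * f₀ ^ θ * E ^ ((2:ℝ)/n)) * E ^ θ := by
      have hm := mul_le_mul_of_nonneg_right h1 hf₀θ.le
      calc (1 - h * K' ^ 2) * E ^ θ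
          = (1 - h * K' ^ 2) * (E ^ θ / f₀ ^ θ) * f₀ ^ θ := by field_simp
        _ ≤ K ^ 2 * E * f₀ ^ θ := hm
        _ = K ^ 2 * (E ^ θ * E ^ ((2:ℝ)/n)) * f₀ ^ θ := by rw [← hEsplit]
        _ = (K ^ 2 * f₀ ^ θ * E ^ ((2:ℝ)/n)) * E ^ θ := by ring
    exact le_of_mul_le_mul_right h3' hEθ
  have h5 : (1 - h * K' ^ 2) ^ ((n:ℝ)/2)
      ≤ (K ^ 2 * f₀ ^ θ * E ^ ((2:ℝ)/n)) ^ ((n:ℝ)/2) :=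
    Real.rpow_le_rpow hc.le h4 (by positivity)
  have e1 : ((K ^ 2 : ℝ)) ^ ((n:ℝ)/2) = K ^ n := by
    rw [← Real.rpow_natCast K 2, ← Real.rpow_mul hK.le, ← Real.rpow_natCast K n]
    congr 1
    push_cast
    ring
  have e2 : (f₀ ^ θ) ^ ((n:ℝ)/2) = f₀ ^ (((n:ℝ) - 2)/2) := by
    rw [← Real.rpow_mul hf₀.le]
    congr 1
    rw [hθ]
    field_simp
  have e3 : (E ^ ((2:ℝ)/n)) ^ ((n:ℝ)/2) = E := by
    rw [← Real.rpow_mul hEpos.le, show (2:ℝ)/n * ((n:ℝ)/2) = 1 by field_simp, Real.rpow_one]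
  have hrw : (K ^ 2 * f₀ ^ θ * E ^ ((2:ℝ)/n)) ^ ((n:ℝ)/2)
      = K ^ n * f₀ ^ (((n:ℝ) - 2)/2) * E := by
    rw [Real.mul_rpow (by positivity) (by positivity),
        Real.mul_rpow (by positivity) (by positivity), e1, e2, e3]
  rw [hrw] at h5
  rw [ge_iff_le, div_le_iff₀ (by positivity), hweak]
  calc (1 - h * K' ^ 2) ^ ((n:ℝ)/2)
      ≤ K ^ n * f₀ ^ (((n:ℝ) - 2)/2) * E := h5
    _ = 1 / (n:ℝ) * (f₀ * S) * ((n:ℝ) * f₀ ^ (((n:ℝ) - 2)/2) * K ^ n) := by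
        rw [← hEdef]; field_simp
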